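/- Let n ≥ 1 be an integer and σ a real with 0 < 2σ < n, and let c > 0, C₀ > 0. Then there exists a constant C > 0 such that for every t > 0 and every nonnegative f ∈ L²(ℝⁿ), ‖ φ_σ(·,t) · (G(·, ct) ∗ (φ_σ(·,t) f)) ‖_{L²(ℝⁿ)} ≤ C·‖f‖_{L²(ℝⁿ)}; consequently any integral operator T_t with measurable kernel satisfying 0 ≤ K(t,x,y) ≤ C₀·φ_σ(x,t)·φ_σ(y,t)·G(x−y, ct) is bounded on L²(ℝⁿ) with operator norm bounded uniformly in t. -/

import Mathlib

open Real MeasureTheory Metric Set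
open scoped ENNReal NNReal

/-- The Gauss–Weierstrass heat kernel on `ℝⁿ`. -/
noncomputable def heatKernel (n : ℕ) (x : EuclideanSpace ℝ (Fin n)) (t : ℝ) : ℝ :=
  (4 * Real.pi * t) ^ (-(n : ℝ) / 2) * Real.exp (-‖x‖ ^ 2 / (4 * t))

/-- The weight `φ_σ(x,t) = (√t/|x|)^σ` for `|x| ≤ √t`, and `1` for `|x| ≥ √t`. -/
noncomputable def phiWeight (n : ℕ) (σ : ℝ) (x : EuclideanSpace ℝ (Fin n)) (t : ℝ) : ℝ :=
  if ‖x‖ ≤ Real.sqrt t then (Real.sqrt t / ‖x‖) ^ σ else 1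

section Aux

variable {n : ℕ} {σ c t : ℝ}

local notation "X" => EuclideanSpace ℝ (Fin n)

lemma hk_nonneg (ht : 0 < t) (x : X) : 0 ≤ heatKernel n x t := by
  unfold heatKernel; positivity

lemma hk_le (ht : 0 < t) (x : X) :
    heatKernel n x t ≤ (4 * π * t) ^ (-(n : ℝ) / 2) := by
  unfold heatKernel
  apply mul_le_of_le_one_right (by positivity)
  exact Real.exp_le_one_iff.2
    (div_nonpos_of_nonpos_of_nonneg (neg_nonpos.2 (by positivity)) (by positivity))

lemma hk_meas : Measurable fun x : X => heatKernel n x t := by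
  unfold heatKernel; fun_prop

lemma hk_symm (x y : X) : heatKernel n (x - y) t = heatKernel n (y - x) t := by
  unfold heatKernel; rw [norm_sub_rev]

lemma phi_nonneg (x : X) : 0 ≤ phiWeight n σ x t := by
  unfold phiWeight; split_ifs
  · positivity
  · norm_num

lemma phi_meas : Measurable fun x : X => phiWeight n σ x t := by
  unfold phiWeight
  exact Measurable.ite (measurableSet_le measurable_norm measurable_const)
    ((measurable_const.div measurable_norm).pow measurable_const) measurable_const

/-- total mass of the heat kernel -/
lemma gauss_lint (ht : 0 < t) :
    ∫⁻ x : X, ENNReal.ofReal (heatKernel n x t) = 1 := by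
  have hb : (0 : ℝ) < 1 / (4 * t) := by positivity
  have hint : Integrable (fun x : X => Real.exp (-(1 / (4 * t)) * ‖x‖ ^ 2)) := by
    have h := (GaussianFourier.integrable_cexp_neg_mul_sq_norm_add
      (V := X) (b := ((1 : ℂ) / (4 * t))) (by simpa using hb) 0 0).norm
    apply h.congr
    filter_upwards with v
    have hv : (-(1 / (4 * (t : ℂ))) * (‖v‖ : ℂ) ^ 2 + 0 * ((inner ℝ 0 v : ℝ) : ℂ))
        = ((-(1 / (4 * t)) * ‖v‖ ^ 2 : ℝ) : ℂ) := by push_cast; ring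
    rw [hv, Complex.norm_exp, Complex.ofReal_re]
  have hval : ∫ x : X, Real.exp (-(1 / (4 * t)) * ‖x‖ ^ 2)
      = (π / (1 / (4 * t))) ^ ((n : ℝ) / 2) := by
    have h := GaussianFourier.integral_rexp_neg_mul_sq_norm (V := X) hb
    simpa [finrank_euclideanSpace_fin] using h
  have hexp : ∀ x : X, heatKernel n x t
      = (4 * π * t) ^ (-(n : ℝ) / 2) * Real.exp (-(1 / (4 * t)) * ‖x‖ ^ 2) := by
    intro x
    unfold heatKernel
    congr 1
    ring_nf
  simp only [hexp]
  rw [← ofReal_integral_eq_lintegral_ofReal (hint.const_mul _)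
    (Filter.Eventually.of_forall fun x => by positivity)]
  rw [integral_const_mul, hval]
  rw [div_div_eq_mul_div, div_one]
  rw [show π * (4 * t) = 4 * π * t by ring, ← Real.rpow_add (by positivity)]
  rw [show -(n : ℝ) / 2 + (n : ℝ) / 2 = 0 by ring, Real.rpow_zero, ENNReal.ofReal_one]

/-- scaling of lintegrals under dilation -/
lemma lint_smul {R : ℝ} (hR : 0 < R) (g : X → ℝ≥0∞) (hg : Measurable g) :
    ∫⁻ w : X, g w = ENNReal.ofReal (R ^ n) * ∫⁻ u : X, g (R • u) := by
  have h1 : ∫⁻ u : X, g (R • u) ∂volume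
      = ∫⁻ w : X, g w ∂(Measure.map (R • ·) volume) :=
    (lintegral_map hg (measurable_const_smul R)).symm
  rw [h1, Measure.map_addHaar_smul volume hR.ne', lintegral_smul_measure,
    finrank_euclideanSpace_fin, smul_eq_mul, ← mul_assoc, ← ENNReal.ofReal_mul (by positivity),
    abs_of_nonneg (by positivity), mul_inv_cancel₀ (by positivity), ENNReal.ofReal_one, one_mul]

lemma pow_calc (k : ℕ) (n : ℕ) (σ : ℝ) :
    ((2⁻¹ : ℝ) ^ (k + 1)) ^ (-(2 * σ)) * ((2⁻¹ : ℝ) ^ k) ^ (n : ℕ)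
      = 2 ^ (2 * σ) * ((2 : ℝ) ^ (2 * σ - n)) ^ k := by
  have h2 : (0 : ℝ) ≤ 2 := by norm_num
  have e1 : ((2⁻¹ : ℝ) ^ (k + 1)) = (2 : ℝ) ^ (-((k + 1 : ℕ) : ℝ)) := by
    rw [Real.rpow_neg h2, Real.rpow_natCast, inv_pow]
  have e2 : ((2⁻¹ : ℝ) ^ k) = (2 : ℝ) ^ (-((k : ℕ) : ℝ)) := by
    rw [Real.rpow_neg h2, Real.rpow_natCast, inv_pow]
  rw [e1, e2, ← Real.rpow_mul h2, ← Real.rpow_natCast ((2:ℝ) ^ (-((k:ℕ):ℝ))) n,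
    ← Real.rpow_mul h2, ← Real.rpow_natCast ((2:ℝ) ^ (2*σ - n)) k, ← Real.rpow_mul h2,
    ← Real.rpow_add (by norm_num : (0:ℝ) < 2), ← Real.rpow_add (by norm_num : (0:ℝ) < 2)]
  congr 1
  push_cast
  ring

/-- finiteness of the singular integral on the unit ball -/
lemma M_lt_top (hn : 1 ≤ n) (hσ : 0 < σ) (hσn : 2 * σ < (n : ℝ)) :
    ∫⁻ u : X in closedBall 0 1, ENNReal.ofReal (‖u‖ ^ (-(2 * σ))) < ∞ := by
  have hne : Nonempty (Fin n) := ⟨⟨0, hn⟩⟩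
  classical
  set f : X → ℝ≥0∞ := fun u => ENNReal.ofReal (‖u‖ ^ (-(2 * σ))) with hfdef
  set S : ℕ → Set X := fun k =>
    closedBall 0 ((2⁻¹ : ℝ) ^ k) \ closedBall 0 ((2⁻¹ : ℝ) ^ (k + 1)) with hSdef
  have hcover : closedBall (0 : X) 1 ⊆ {0} ∪ ⋃ k, S k := by
    intro u hu
    rcases eq_or_ne u 0 with rfl | hu0
    · exact Or.inl rfl
    right
    have hnorm : 0 < ‖u‖ := norm_pos_iff.2 hu0
    have hu1 : ‖u‖ ≤ 1 := mem_closedBall_zero_iff.1 hu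
    have hex : ∃ m : ℕ, (2⁻¹ : ℝ) ^ m < ‖u‖ :=
      exists_pow_lt_of_lt_one hnorm (by norm_num)
    have hm0 : Nat.find hex ≠ 0 := by
      intro h
      have := Nat.find_spec hex
      rw [h] at this
      simp only [pow_zero] at this
      linarith
    obtain ⟨k, hk⟩ := Nat.exists_eq_succ_of_ne_zero hm0
    refine mem_iUnion.2 ⟨k, ?_, ?_⟩
    · rw [mem_closedBall_zero_iff]
      have := Nat.find_min hex (m := k) (by omega)
      exact not_lt.1 this
    · intro hmem
      rw [mem_closedBall_zero_iff] at hmem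
      have hspec := Nat.find_spec hex
      rw [hk] at hspec
      exact absurd hspec (not_lt.2 hmem)
  set Vb : ℝ≥0∞ := volume (ball (0 : X) 1) with hVb
  have hVbfin : Vb < ∞ := measure_ball_lt_top
  set r : ℝ := (2 : ℝ) ^ (2 * σ - n) with hr
  have hr0 : 0 ≤ r := Real.rpow_nonneg (by norm_num) _
  have hr1 : r < 1 := Real.rpow_lt_one_of_one_lt_of_neg one_lt_two (by linarith)
  have hterm : ∀ k : ℕ, ∫⁻ u in S k, f u
      ≤ (ENNReal.ofReal (2 ^ (2 * σ)) * Vb) * ENNReal.ofReal r ^ k := by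
    intro k
    have hb1 : (0 : ℝ) < (2⁻¹ : ℝ) ^ (k + 1) := by positivity
    have hstep1 : ∫⁻ u in S k, f u
        ≤ ∫⁻ _u in S k, ENNReal.ofReal (((2⁻¹ : ℝ) ^ (k + 1)) ^ (-(2 * σ))) := by
      apply setLIntegral_mono' (measurableSet_closedBall.diff measurableSet_closedBall)
      intro u hu
      have h1 : (2⁻¹ : ℝ) ^ (k + 1) < ‖u‖ := by
        have := hu.2
        rw [mem_closedBall_zero_iff] at this
        exact not_le.1 this
      exact ENNReal.ofReal_le_ofReal
        (Real.rpow_le_rpow_of_nonpos hb1 h1.le (by linarith))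
    have hstep2 : ∫⁻ _u in S k, ENNReal.ofReal (((2⁻¹ : ℝ) ^ (k + 1)) ^ (-(2 * σ)))
        ≤ ENNReal.ofReal (((2⁻¹ : ℝ) ^ (k + 1)) ^ (-(2 * σ)))
          * (ENNReal.ofReal (((2⁻¹ : ℝ) ^ k) ^ n) * Vb) := by
      rw [setLIntegral_const]
      apply mul_le_mul_right
      calc volume (S k) ≤ volume (closedBall (0 : X) ((2⁻¹ : ℝ) ^ k)) :=
            measure_mono diff_subset
        _ = ENNReal.ofReal (((2⁻¹ : ℝ) ^ k) ^ n) * Vb := by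
            rw [Measure.addHaar_closedBall volume 0 (by positivity),
              finrank_euclideanSpace_fin]
    refine (hstep1.trans hstep2).trans (le_of_eq ?_)
    rw [← mul_assoc, ← ENNReal.ofReal_mul (by positivity), pow_calc k n σ,
      ← ENNReal.ofReal_pow hr0, ENNReal.ofReal_mul (by positivity)]
    ring
  have hsum : ∑' k, ∫⁻ u in S k, f u
      ≤ (ENNReal.ofReal (2 ^ (2 * σ)) * Vb) * (1 - ENNReal.ofReal r)⁻¹ := by
    calc ∑' k, ∫⁻ u in S k, f u
        ≤ ∑' k, (ENNReal.ofReal (2 ^ (2 * σ)) * Vb) * ENNReal.ofReal r ^ k :=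
          ENNReal.tsum_le_tsum hterm
      _ = (ENNReal.ofReal (2 ^ (2 * σ)) * Vb) * ∑' k, ENNReal.ofReal r ^ k :=
          ENNReal.tsum_mul_left
      _ = _ := by rw [ENNReal.tsum_geometric]
  have hfin : (ENNReal.ofReal (2 ^ (2 * σ)) * Vb) * (1 - ENNReal.ofReal r)⁻¹ < ∞ := by
    apply ENNReal.mul_lt_top (ENNReal.mul_lt_top ENNReal.ofReal_lt_top hVbfin)
    rw [ENNReal.inv_lt_top]
    exact tsub_pos_of_lt (by simpa using ENNReal.ofReal_lt_one.2 hr1)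
  calc ∫⁻ u in closedBall 0 1, f u ≤ ∫⁻ u in {0} ∪ ⋃ k, S k, f u :=
        lintegral_mono_set hcover
    _ ≤ (∫⁻ u in ({0} : Set X), f u) + ∫⁻ u in ⋃ k, S k, f u :=
        lintegral_union_le _ _ _
    _ ≤ 0 + ∑' k, ∫⁻ u in S k, f u := by
        gcongr
        · exact le_of_eq (setLIntegral_measure_zero _ _ (measure_singleton 0))
        · exact lintegral_iUnion_le _ _
    _ < ∞ := by
        rw [zero_add]
        exact lt_of_le_of_lt hsum hfin

/-- the key uniform bound -/
lemma key_bound (hn : 1 ≤ n) (hσ : 0 < σ) (hσn : 2 * σ < (n : ℝ)) (hc : 0 < c) :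
    ∃ A : ℝ, 1 ≤ A ∧ ∀ t : ℝ, 0 < t → ∀ z : X,
      ∫⁻ w : X, ENNReal.ofReal (heatKernel n (z - w) (c * t))
        * ENNReal.ofReal (phiWeight n σ w t) ^ (2 : ℝ) ≤ ENNReal.ofReal A := by
  set M := ∫⁻ u : X in closedBall 0 1, ENNReal.ofReal (‖u‖ ^ (-(2 * σ))) with hMdef
  have hMfin : M ≠ ∞ := (M_lt_top hn hσ hσn).ne
  refine ⟨1 + (4 * π * c) ^ (-(n : ℝ) / 2) * M.toReal,
    le_add_of_nonneg_right (by positivity), ?_⟩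
  intro t ht z
  have hct : 0 < c * t := mul_pos hc ht
  have hst : 0 < Real.sqrt t := Real.sqrt_pos.2 ht
  set c₁ : ℝ := (4 * π * (c * t)) ^ (-(n : ℝ) / 2) * t ^ σ with hc₁
  have hc₁0 : 0 ≤ c₁ := by rw [hc₁]; positivity
  set g : X → ℝ≥0∞ := (closedBall (0 : X) (Real.sqrt t)).indicator
      (fun w => ENNReal.ofReal (‖w‖ ^ (-(2 * σ)))) with hgdef
  have hgmeas : Measurable g :=
    Measurable.indicator ((measurable_norm.pow measurable_const).ennreal_ofReal)
      measurableSet_closedBall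
  -- pointwise bound by the majorant
  have hpt : ∀ w : X,
      ENNReal.ofReal (heatKernel n (z - w) (c * t))
          * ENNReal.ofReal (phiWeight n σ w t) ^ (2 : ℝ)
        ≤ ENNReal.ofReal (heatKernel n (z - w) (c * t)) + ENNReal.ofReal c₁ * g w := by
    intro w
    by_cases hw : ‖w‖ ≤ Real.sqrt t
    · have hgw : g w = ENNReal.ofReal (‖w‖ ^ (-(2 * σ))) := by
        rw [hgdef, indicator_of_mem (mem_closedBall_zero_iff.2 hw)]
      have h1 : ENNReal.ofReal (phiWeight n σ w t) ^ (2 : ℝ)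
          = ENNReal.ofReal ((Real.sqrt t / ‖w‖) ^ (σ * 2)) := by
        rw [phiWeight, if_pos hw,
          ENNReal.ofReal_rpow_of_nonneg (by positivity) (by norm_num : (0:ℝ) ≤ 2),
          ← Real.rpow_mul (by positivity)]
      have h2 : (Real.sqrt t / ‖w‖) ^ (σ * 2) ≤ t ^ σ * ‖w‖ ^ (-(2 * σ)) := by
        rcases eq_or_ne w 0 with rfl | hw0
        · simp only [norm_zero, div_zero]
          rw [Real.zero_rpow (by positivity), Real.zero_rpow (by intro h; nlinarith), mul_zero]
        · have hw0' : 0 < ‖w‖ := norm_pos_iff.2 hw0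
          have e1 : Real.sqrt t ^ (σ * 2) = t ^ σ := by
            rw [Real.sqrt_eq_rpow, ← Real.rpow_mul ht.le,
              show (1:ℝ) / 2 * (σ * 2) = σ by ring]
          rw [Real.div_rpow (Real.sqrt_nonneg t) (norm_nonneg w), e1, div_eq_mul_inv,
            ← Real.rpow_neg (norm_nonneg w)]
          rw [show -(σ * 2) = -(2 * σ) by ring]
      calc ENNReal.ofReal (heatKernel n (z - w) (c * t))
            * ENNReal.ofReal (phiWeight n σ w t) ^ (2 : ℝ)
          = ENNReal.ofReal (heatKernel n (z - w) (c * t) * (Real.sqrt t / ‖w‖) ^ (σ * 2)) := by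
            rw [h1, ← ENNReal.ofReal_mul (hk_nonneg hct _)]
        _ ≤ ENNReal.ofReal ((4 * π * (c * t)) ^ (-(n : ℝ) / 2) * (t ^ σ * ‖w‖ ^ (-(2 * σ)))) := by
            apply ENNReal.ofReal_le_ofReal
            exact mul_le_mul (hk_le hct _) h2 (by positivity) (by positivity)
        _ = ENNReal.ofReal c₁ * g w := by
            rw [hgw, hc₁, ← ENNReal.ofReal_mul (by positivity)]
            ring_nf
        _ ≤ _ := le_add_self
    · have hφ : phiWeight n σ w t = 1 := by rw [phiWeight, if_neg hw]
      rw [hφ, ENNReal.ofReal_one, ENNReal.one_rpow, mul_one]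
      exact le_self_add
  -- integrate the majorant
  have hgauss : ∫⁻ w : X, ENNReal.ofReal (heatKernel n (z - w) (c * t)) = 1 := by
    have h := (Measure.measurePreserving_sub_left (volume : Measure X) z).lintegral_comp
      (f := fun x : X => ENNReal.ofReal (heatKernel n x (c * t))) hk_meas.ennreal_ofReal
    rw [show (∫⁻ w : X, ENNReal.ofReal (heatKernel n (z - w) (c * t)))
      = ∫⁻ x : X, ENNReal.ofReal (heatKernel n x (c * t)) from h, gauss_lint hct]
  have hsmul : ∀ u : X, g (Real.sqrt t • u)
      = ENNReal.ofReal (Real.sqrt t ^ (-(2 * σ))) *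
        (closedBall (0 : X) 1).indicator (fun u => ENNReal.ofReal (‖u‖ ^ (-(2 * σ)))) u := by
    intro u
    have hnorm : ‖Real.sqrt t • u‖ = Real.sqrt t * ‖u‖ := by
      rw [norm_smul, Real.norm_eq_abs, abs_of_nonneg (Real.sqrt_nonneg t)]
    by_cases hu : ‖u‖ ≤ 1
    · rw [hgdef, indicator_of_mem
        (mem_closedBall_zero_iff.2 (by rw [hnorm]; exact mul_le_of_le_one_right hst.le hu)),
        indicator_of_mem (mem_closedBall_zero_iff.2 hu), hnorm,
        Real.mul_rpow (Real.sqrt_nonneg t) (norm_nonneg u),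
        ENNReal.ofReal_mul (by positivity)]
    · rw [hgdef, indicator_of_notMem, indicator_of_notMem
        (fun h => hu (mem_closedBall_zero_iff.1 h)), mul_zero]
      intro h
      apply hu
      have := mem_closedBall_zero_iff.1 h
      rw [hnorm] at this
      exact (mul_le_iff_le_one_right hst).1 this
  have hgint : ∫⁻ w : X, g w
      = ENNReal.ofReal (Real.sqrt t ^ n) * (ENNReal.ofReal (Real.sqrt t ^ (-(2 * σ))) * M) := by
    rw [lint_smul hst g hgmeas]
    congr 1
    rw [lintegral_congr hsmul,
      lintegral_const_mul _ (Measurable.indicator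
        ((measurable_norm.pow measurable_const).ennreal_ofReal) measurableSet_closedBall),
      lintegral_indicator measurableSet_closedBall]
  -- put everything together
  have e : c₁ * (Real.sqrt t ^ n * Real.sqrt t ^ (-(2 * σ))) = (4 * π * c) ^ (-(n : ℝ) / 2) := by
    have h1 : Real.sqrt t ^ n = t ^ ((n : ℝ) / 2) := by
      rw [← Real.rpow_natCast (Real.sqrt t) n, Real.sqrt_eq_rpow, ← Real.rpow_mul ht.le,
        show (1:ℝ) / 2 * (n : ℝ) = (n : ℝ) / 2 by ring]
    have h2 : Real.sqrt t ^ (-(2 * σ)) = t ^ (-σ) := by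
      rw [Real.sqrt_eq_rpow, ← Real.rpow_mul ht.le,
        show (1:ℝ) / 2 * (-(2 * σ)) = -σ by ring]
    rw [h1, h2, hc₁, show 4 * π * (c * t) = (4 * π * c) * t by ring,
      Real.mul_rpow (by positivity) ht.le]
    rw [mul_assoc ((4 * π * c) ^ (-(n : ℝ) / 2)), mul_assoc]
    nth_rewrite 2 [← mul_one ((4 * π * c) ^ (-(n : ℝ) / 2))]
    congr 1
    rw [← Real.rpow_add ht, ← Real.rpow_add ht, ← Real.rpow_add ht]
    rw [show -(n : ℝ) / 2 + σ + ((n : ℝ) / 2 + -σ) = 0 by ring, Real.rpow_zero]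
  calc ∫⁻ w : X, ENNReal.ofReal (heatKernel n (z - w) (c * t))
          * ENNReal.ofReal (phiWeight n σ w t) ^ (2 : ℝ)
      ≤ ∫⁻ w : X, (ENNReal.ofReal (heatKernel n (z - w) (c * t)) + ENNReal.ofReal c₁ * g w) :=
        lintegral_mono hpt
    _ = 1 + ENNReal.ofReal c₁ * ∫⁻ w : X, g w := by
        have hGm : Measurable fun w : X => ENNReal.ofReal (heatKernel n (z - w) (c * t)) :=
          (hk_meas.comp (measurable_const.sub measurable_id)).ennreal_ofReal
        rw [lintegral_add_left hGm, lintegral_const_mul _ hgmeas, hgauss]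
    _ = 1 + ENNReal.ofReal ((4 * π * c) ^ (-(n : ℝ) / 2)) * M := by
        rw [hgint, ← mul_assoc, ← mul_assoc, ← ENNReal.ofReal_mul hc₁0,
          ← ENNReal.ofReal_mul (mul_nonneg hc₁0 (by positivity)), mul_assoc c₁, e]
    _ = ENNReal.ofReal (1 + (4 * π * c) ^ (-(n : ℝ) / 2) * M.toReal) := by
        rw [ENNReal.ofReal_add (by norm_num) (by positivity), ENNReal.ofReal_one,
          ENNReal.ofReal_mul (by positivity), ENNReal.ofReal_toReal hMfin]

/-- the master Schur-type estimate -/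
lemma master (hn : 1 ≤ n) (hσ : 0 < σ) (hσn : 2 * σ < (n : ℝ)) (hc : 0 < c) :
    ∃ A : ℝ, 0 < A ∧ ∀ t : ℝ, 0 < t → ∀ F : X → ℝ≥0∞, Measurable F →
      ∫⁻ x : X, (ENNReal.ofReal (phiWeight n σ x t) *
          ∫⁻ y : X, ENNReal.ofReal (heatKernel n (x - y) (c * t)) *
            (ENNReal.ofReal (phiWeight n σ y t) * F y)) ^ (2 : ℝ)
        ≤ ENNReal.ofReal A ^ (2 : ℝ) * ∫⁻ y : X, F y ^ (2 : ℝ) := by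
  obtain ⟨A, hA1, hA⟩ := key_bound (σ := σ) hn hσ hσn hc
  refine ⟨A, lt_of_lt_of_le one_pos hA1, ?_⟩
  intro t ht F hF
  have hΦm : Measurable fun x : X => ENNReal.ofReal (phiWeight n σ x t) :=
    phi_meas.ennreal_ofReal
  have hGm : Measurable fun x : X => ENNReal.ofReal (heatKernel n x (c * t)) :=
    hk_meas.ennreal_ofReal
  set Φ : X → ℝ≥0∞ := fun x => ENNReal.ofReal (phiWeight n σ x t) with hΦ
  set G : X → ℝ≥0∞ := fun x => ENNReal.ofReal (heatKernel n x (c * t)) with hG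
  have htwo : (0:ℝ) ≤ 2 := by norm_num
  -- inner Cauchy–Schwarz
  have hCS : ∀ x : X, (∫⁻ y, G (x - y) * (Φ y * F y)) ^ (2 : ℝ)
      ≤ ENNReal.ofReal A * ∫⁻ y, G (x - y) * F y ^ (2 : ℝ) := by
    intro x
    have hGxm : Measurable fun y : X => G (x - y) :=
      hGm.comp (measurable_const.sub measurable_id)
    have h1 : (fun y => G (x - y) * (Φ y * F y))
        = fun y => (G (x - y) ^ ((1:ℝ)/2) * Φ y) * (G (x - y) ^ ((1:ℝ)/2) * F y) := by
      funext y
      have hhalf : G (x - y) ^ ((1:ℝ)/2) * G (x - y) ^ ((1:ℝ)/2) = G (x - y) := by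
        rw [← ENNReal.rpow_add_of_nonneg ((1:ℝ)/2) ((1:ℝ)/2) (by norm_num) (by norm_num)]
        norm_num
      calc G (x - y) * (Φ y * F y)
          = (G (x - y) ^ ((1:ℝ)/2) * G (x - y) ^ ((1:ℝ)/2)) * (Φ y * F y) := by rw [hhalf]
        _ = _ := by ring
    have hsq : ∀ (h : X → ℝ≥0∞) (y : X),
        (G (x - y) ^ ((1:ℝ)/2) * h y) ^ (2:ℝ) = G (x - y) * h y ^ (2:ℝ) := by
      intro h y
      rw [ENNReal.mul_rpow_of_nonneg _ _ htwo, ← ENNReal.rpow_mul]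
      norm_num
    have hCS0 := ENNReal.lintegral_mul_le_Lp_mul_Lq (volume : Measure X)
      (p := 2) (q := 2) Real.HolderConjugate.two_two
      (f := fun y => G (x - y) ^ ((1:ℝ)/2) * Φ y)
      (g := fun y => G (x - y) ^ ((1:ℝ)/2) * F y)
      (((hGxm.pow measurable_const).mul hΦm).aemeasurable)
      (((hGxm.pow measurable_const).mul hF).aemeasurable)
    simp only [Pi.mul_apply, hsq] at hCS0
    have hkey : ∫⁻ y, G (x - y) * Φ y ^ (2:ℝ) ≤ ENNReal.ofReal A := hA t ht x
    have hb : ∫⁻ y, G (x - y) * (Φ y * F y)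
        ≤ (ENNReal.ofReal A) ^ ((1:ℝ)/2) * (∫⁻ y, G (x - y) * F y ^ (2:ℝ)) ^ ((1:ℝ)/2) := by
      rw [h1]
      refine hCS0.trans ?_
      gcongr
    calc (∫⁻ y, G (x - y) * (Φ y * F y)) ^ (2:ℝ)
        ≤ ((ENNReal.ofReal A) ^ ((1:ℝ)/2) * (∫⁻ y, G (x - y) * F y ^ (2:ℝ)) ^ ((1:ℝ)/2)) ^ (2:ℝ) :=
          ENNReal.rpow_le_rpow hb htwo
      _ = ENNReal.ofReal A * ∫⁻ y, G (x - y) * F y ^ (2:ℝ) := by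
          rw [ENNReal.mul_rpow_of_nonneg _ _ htwo, ← ENNReal.rpow_mul, ← ENNReal.rpow_mul]
          norm_num
  -- outer estimate
  have hmeas2 : Measurable fun p : X × X =>
      Φ p.1 ^ (2:ℝ) * (G (p.1 - p.2) * F p.2 ^ (2:ℝ)) :=
    ((hΦm.comp measurable_fst).pow measurable_const).mul
      ((hGm.comp (measurable_fst.sub measurable_snd)).mul
        ((hF.comp measurable_snd).pow measurable_const))
  calc ∫⁻ x, (Φ x * ∫⁻ y, G (x - y) * (Φ y * F y)) ^ (2:ℝ)
      ≤ ∫⁻ x, ENNReal.ofReal A * ∫⁻ y, Φ x ^ (2:ℝ) * (G (x - y) * F y ^ (2:ℝ)) := by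
        apply lintegral_mono
        intro x
        dsimp only
        have hm2 : Measurable fun y : X => G (x - y) * F y ^ (2:ℝ) :=
          (hGm.comp (measurable_const.sub measurable_id)).mul (hF.pow measurable_const)
        rw [ENNReal.mul_rpow_of_nonneg _ _ htwo, lintegral_const_mul _ hm2]
        calc Φ x ^ (2:ℝ) * (∫⁻ y, G (x - y) * (Φ y * F y)) ^ (2:ℝ)
            ≤ Φ x ^ (2:ℝ) * (ENNReal.ofReal A * ∫⁻ y, G (x - y) * F y ^ (2:ℝ)) :=
              mul_le_mul_right (hCS x) _
          _ = ENNReal.ofReal A * (Φ x ^ (2:ℝ) * ∫⁻ y, G (x - y) * F y ^ (2:ℝ)) := by ring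
    _ = ENNReal.ofReal A * ∫⁻ y, F y ^ (2:ℝ) * ∫⁻ x, G (x - y) * Φ x ^ (2:ℝ) := by
        rw [lintegral_const_mul' _ _ ENNReal.ofReal_ne_top]
        congr 1
        rw [lintegral_lintegral_swap hmeas2.aemeasurable]
        apply lintegral_congr
        intro y
        have hrearr : (fun x => Φ x ^ (2:ℝ) * (G (x - y) * F y ^ (2:ℝ)))
            = fun x => F y ^ (2:ℝ) * (G (x - y) * Φ x ^ (2:ℝ)) := by
          funext x; ring
        have hm : Measurable fun x : X => G (x - y) * Φ x ^ (2:ℝ) :=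
          (hGm.comp (measurable_id.sub measurable_const)).mul (hΦm.pow measurable_const)
        rw [hrearr, lintegral_const_mul _ hm]
    _ ≤ ENNReal.ofReal A * ∫⁻ y, F y ^ (2:ℝ) * ENNReal.ofReal A := by
        gcongr with y
        have hsymm : (∫⁻ x, G (x - y) * Φ x ^ (2:ℝ))
            = ∫⁻ x, ENNReal.ofReal (heatKernel n (y - x) (c * t))
                * ENNReal.ofReal (phiWeight n σ x t) ^ (2:ℝ) := by
          apply lintegral_congr
          intro x
          show ENNReal.ofReal (heatKernel n (x - y) (c * t))
              * ENNReal.ofReal (phiWeight n σ x t) ^ (2:ℝ) = _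
          rw [hk_symm]
        rw [hsymm]
        exact hA t ht y
    _ = ENNReal.ofReal A ^ (2:ℝ) * ∫⁻ y, F y ^ (2:ℝ) := by
        have hAsq : ENNReal.ofReal A ^ (2:ℝ) = ENNReal.ofReal A * ENNReal.ofReal A := by
          rw [show (2:ℝ) = 1 + 1 by norm_num,
            ENNReal.rpow_add_of_nonneg 1 1 zero_le_one zero_le_one, ENNReal.rpow_one]
        rw [lintegral_mul_const _ (hF.pow measurable_const), hAsq]
        ring

end Aux

/-- Uniform `L² → L²` boundedness: the weighted convolution operator
`f ↦ φ_σ(·,t)·(G(·,ct) ∗ (φ_σ(·,t) f))` is bounded on `L²` uniformly in `t > 0`;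
consequently any integral operator with kernel dominated by
`C₀·φ_σ(x,t)·φ_σ(y,t)·G(x−y,ct)` is bounded on `L²` uniformly in `t`. -/
theorem L2_uniform_bound (n : ℕ) (hn : 1 ≤ n) (σ : ℝ)
    (hσ : 0 < σ) (hσn : 2 * σ < (n : ℝ)) (c C₀ : ℝ) (hc : 0 < c) (hC₀ : 0 < C₀) :
    ∃ C > 0,
      (∀ t > (0 : ℝ), ∀ f : EuclideanSpace ℝ (Fin n) → ℝ, (∀ x, 0 ≤ f x) →
        MemLp f 2 volume →
        eLpNorm (fun x : EuclideanSpace ℝ (Fin n) =>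
            phiWeight n σ x t *
              ∫ y, heatKernel n (x - y) (c * t) * (phiWeight n σ y t * f y)) 2 volume ≤
          ENNReal.ofReal C * eLpNorm f 2 volume) ∧
      (∀ K : ℝ → EuclideanSpace ℝ (Fin n) → EuclideanSpace ℝ (Fin n) → ℝ,
        (Measurable fun q : ℝ × EuclideanSpace ℝ (Fin n) × EuclideanSpace ℝ (Fin n) =>
          K q.1 q.2.1 q.2.2) →
        (∀ t > (0 : ℝ), ∀ x y, 0 ≤ K t x y) →
        (∀ t > (0 : ℝ), ∀ x y : EuclideanSpace ℝ (Fin n), x ≠ 0 → y ≠ 0 →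
          K t x y ≤ C₀ * phiWeight n σ x t * phiWeight n σ y t *
            heatKernel n (x - y) (c * t)) →
        ∀ t > (0 : ℝ), ∀ f : EuclideanSpace ℝ (Fin n) → ℝ, (∀ x, 0 ≤ f x) →
          MemLp f 2 volume →
          eLpNorm (fun x : EuclideanSpace ℝ (Fin n) => ∫ y, K t x y * f y) 2 volume ≤
            ENNReal.ofReal (C₀ * C) * eLpNorm f 2 volume) := by
  obtain ⟨A, hA0, hA⟩ := master (σ := σ) (c := c) hn hσ hσn hc
  have hne : Nonempty (Fin n) := ⟨⟨0, hn⟩⟩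
  have htwo : (0:ℝ) ≤ 2 := by norm_num
  -- a measurable nonnegative representative
  have hrep : ∀ f : EuclideanSpace ℝ (Fin n) → ℝ, (∀ x, 0 ≤ f x) → MemLp f 2 volume →
      ∃ g : EuclideanSpace ℝ (Fin n) → ℝ,
        Measurable g ∧ f =ᵐ[volume] g ∧ ∀ x, 0 ≤ g x := by
    intro f hf0 hmem
    refine ⟨fun x => max (hmem.1.mk f x) 0,
      (hmem.1.stronglyMeasurable_mk.measurable).max measurable_const, ?_,
      fun x => le_max_right _ _⟩
    filter_upwards [hmem.1.ae_eq_mk] with x hx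
    rw [← hx]
    exact (max_eq_left (hf0 x)).symm
  refine ⟨A, hA0, ?_, ?_⟩
  · -- first part
    intro t ht f hf0 hmem
    obtain ⟨g, hgm, hfg, hg0⟩ := hrep f hf0 hmem
    have hct : 0 < c * t := mul_pos hc ht
    have hFm : Measurable fun y : EuclideanSpace ℝ (Fin n) => ENNReal.ofReal (g y) :=
      hgm.ennreal_ofReal
    have hpt : ∀ x : EuclideanSpace ℝ (Fin n),
        (‖phiWeight n σ x t * ∫ y, heatKernel n (x - y) (c * t) * (phiWeight n σ y t * f y)‖₊ : ℝ≥0∞)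
          ≤ ENNReal.ofReal (phiWeight n σ x t) *
            ∫⁻ y, ENNReal.ofReal (heatKernel n (x - y) (c * t)) *
              (ENNReal.ofReal (phiWeight n σ y t) * ENNReal.ofReal (g y)) := by
      intro x
      have hcong : (∫ y, heatKernel n (x - y) (c * t) * (phiWeight n σ y t * f y))
          = ∫ y, heatKernel n (x - y) (c * t) * (phiWeight n σ y t * g y) := by
        apply integral_congr_ae
        filter_upwards [hfg] with y hy
        rw [hy]
      have hnn : 0 ≤ᵐ[volume] fun y => heatKernel n (x - y) (c * t) * (phiWeight n σ y t * g y) :=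
        Filter.Eventually.of_forall fun y =>
          mul_nonneg (hk_nonneg hct _) (mul_nonneg (phi_nonneg _) (hg0 y))
      have hsm : AEStronglyMeasurable
          (fun y => heatKernel n (x - y) (c * t) * (phiWeight n σ y t * g y)) volume :=
        ((hk_meas.comp (measurable_const.sub measurable_id)).mul
          (phi_meas.mul hgm)).aestronglyMeasurable
      rw [hcong, integral_eq_lintegral_of_nonneg_ae hnn hsm]
      have hofeq : (∫⁻ y, ENNReal.ofReal
            (heatKernel n (x - y) (c * t) * (phiWeight n σ y t * g y)))
          = ∫⁻ y, ENNReal.ofReal (heatKernel n (x - y) (c * t)) *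
              (ENNReal.ofReal (phiWeight n σ y t) * ENNReal.ofReal (g y)) := by
        apply lintegral_congr
        intro y
        rw [ENNReal.ofReal_mul (hk_nonneg hct _), ENNReal.ofReal_mul (phi_nonneg _)]
      rw [← enorm_eq_nnnorm, Real.enorm_eq_ofReal (mul_nonneg (phi_nonneg _) ENNReal.toReal_nonneg),
        ENNReal.ofReal_mul (phi_nonneg _), ← hofeq]
      exact mul_le_mul_right ENNReal.ofReal_toReal_le _
    have hf2 : (∫⁻ y, ENNReal.ofReal (g y) ^ (2:ℝ))
        = ∫⁻ y, (‖f y‖₊ : ℝ≥0∞) ^ (2:ℝ) := by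
      apply lintegral_congr_ae
      filter_upwards [hfg] with y hy
      rw [hy]
      congr 1
      exact (Real.enorm_eq_ofReal (hg0 y)).symm
    rw [eLpNorm_eq_lintegral_rpow_enorm_toReal two_ne_zero ENNReal.ofNat_ne_top,
      eLpNorm_eq_lintegral_rpow_enorm_toReal two_ne_zero ENNReal.ofNat_ne_top]
    simp only [ENNReal.toReal_ofNat]
    calc (∫⁻ x, (‖phiWeight n σ x t *
              ∫ y, heatKernel n (x - y) (c * t) * (phiWeight n σ y t * f y)‖₊ : ℝ≥0∞)
            ^ (2:ℝ)) ^ (1 / (2:ℝ))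
        ≤ (ENNReal.ofReal A ^ (2:ℝ) * ∫⁻ y, ENNReal.ofReal (g y) ^ (2:ℝ)) ^ (1 / (2:ℝ)) := by
          apply ENNReal.rpow_le_rpow _ (by norm_num)
          refine le_trans (lintegral_mono fun x => ?_)
            (hA t ht (fun y => ENNReal.ofReal (g y)) hFm)
          exact ENNReal.rpow_le_rpow (hpt x) htwo
      _ = ENNReal.ofReal A * (∫⁻ y, ENNReal.ofReal (g y) ^ (2:ℝ)) ^ (1 / (2:ℝ)) := by
          rw [ENNReal.mul_rpow_of_nonneg _ _ (by norm_num), ← ENNReal.rpow_mul]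
          norm_num
      _ = ENNReal.ofReal A *
            (∫⁻ y, (‖f y‖₊ : ℝ≥0∞) ^ (2:ℝ)) ^ (1 / (2:ℝ)) := by rw [hf2]
  · -- second part
    intro K hKmeas hK0 hKb t ht f hf0 hmem
    obtain ⟨g, hgm, hfg, hg0⟩ := hrep f hf0 hmem
    have hct : 0 < c * t := mul_pos hc ht
    have hFm : Measurable fun y : EuclideanSpace ℝ (Fin n) => ENNReal.ofReal (g y) :=
      hgm.ennreal_ofReal
    have hKtm : Measurable fun p : EuclideanSpace ℝ (Fin n) × EuclideanSpace ℝ (Fin n) =>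
        K t p.1 p.2 :=
      hKmeas.comp (measurable_const.prodMk (measurable_fst.prodMk measurable_snd))
    have hae : ∀ᵐ x : EuclideanSpace ℝ (Fin n) ∂volume, x ≠ 0 := by
      have hset : {a : EuclideanSpace ℝ (Fin n) | ¬ a ≠ 0}
          = {(0 : EuclideanSpace ℝ (Fin n))} := by
        ext a; simp
      rw [ae_iff, hset]
      exact measure_singleton 0
    have hpt : ∀ᵐ x ∂(volume : Measure (EuclideanSpace ℝ (Fin n))),
        (‖∫ y, K t x y * f y‖₊ : ℝ≥0∞)
          ≤ ENNReal.ofReal C₀ * (ENNReal.ofReal (phiWeight n σ x t) *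
            ∫⁻ y, ENNReal.ofReal (heatKernel n (x - y) (c * t)) *
              (ENNReal.ofReal (phiWeight n σ y t) * ENNReal.ofReal (g y))) := by
      filter_upwards [hae] with x hx
      have hcong : (∫ y, K t x y * f y) = ∫ y, K t x y * g y := by
        apply integral_congr_ae
        filter_upwards [hfg] with y hy
        rw [hy]
      have hnn : 0 ≤ᵐ[volume] fun y => K t x y * g y :=
        Filter.Eventually.of_forall fun y => mul_nonneg (hK0 t ht x y) (hg0 y)
      have hsm : AEStronglyMeasurable (fun y => K t x y * g y) volume :=
        ((hKtm.comp (measurable_const.prodMk measurable_id)).mul hgm).aestronglyMeasurable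
      rw [hcong, integral_eq_lintegral_of_nonneg_ae hnn hsm]
      have hle : (∫⁻ y, ENNReal.ofReal (K t x y * g y))
          ≤ ENNReal.ofReal C₀ * (ENNReal.ofReal (phiWeight n σ x t) *
            ∫⁻ y, ENNReal.ofReal (heatKernel n (x - y) (c * t)) *
              (ENNReal.ofReal (phiWeight n σ y t) * ENNReal.ofReal (g y))) := by
        have hmono : ∀ᵐ y ∂(volume : Measure (EuclideanSpace ℝ (Fin n))),
            ENNReal.ofReal (K t x y * g y)
              ≤ (ENNReal.ofReal C₀ * ENNReal.ofReal (phiWeight n σ x t)) *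
                (ENNReal.ofReal (heatKernel n (x - y) (c * t)) *
                  (ENNReal.ofReal (phiWeight n σ y t) * ENNReal.ofReal (g y))) := by
          filter_upwards [hae] with y hy
          have hb : K t x y * g y
              ≤ (C₀ * phiWeight n σ x t) * (heatKernel n (x - y) (c * t) *
                  (phiWeight n σ y t * g y)) := by
            have := mul_le_mul_of_nonneg_right (hKb t ht x y hx hy) (hg0 y)
            nlinarith [this]
          refine le_trans (ENNReal.ofReal_le_ofReal hb) (le_of_eq ?_)
          rw [ENNReal.ofReal_mul (mul_nonneg hC₀.le (phi_nonneg _)),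
            ENNReal.ofReal_mul hC₀.le, ENNReal.ofReal_mul (hk_nonneg hct _),
            ENNReal.ofReal_mul (phi_nonneg _)]
        calc (∫⁻ y, ENNReal.ofReal (K t x y * g y))
            ≤ ∫⁻ y, (ENNReal.ofReal C₀ * ENNReal.ofReal (phiWeight n σ x t)) *
                (ENNReal.ofReal (heatKernel n (x - y) (c * t)) *
                  (ENNReal.ofReal (phiWeight n σ y t) * ENNReal.ofReal (g y))) :=
              lintegral_mono_ae hmono
          _ = _ := by
              rw [lintegral_const_mul' _ _
                (ENNReal.mul_ne_top ENNReal.ofReal_ne_top ENNReal.ofReal_ne_top), mul_assoc]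
      refine le_trans ?_ hle
      rw [← enorm_eq_nnnorm, Real.enorm_eq_ofReal ENNReal.toReal_nonneg]
      exact ENNReal.ofReal_toReal_le
    have hf2 : (∫⁻ y, ENNReal.ofReal (g y) ^ (2:ℝ))
        = ∫⁻ y, (‖f y‖₊ : ℝ≥0∞) ^ (2:ℝ) := by
      apply lintegral_congr_ae
      filter_upwards [hfg] with y hy
      rw [hy]
      congr 1
      exact (Real.enorm_eq_ofReal (hg0 y)).symm
    rw [eLpNorm_eq_lintegral_rpow_enorm_toReal two_ne_zero ENNReal.ofNat_ne_top,
      eLpNorm_eq_lintegral_rpow_enorm_toReal two_ne_zero ENNReal.ofNat_ne_top]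
    simp only [ENNReal.toReal_ofNat]
    calc (∫⁻ x, (‖∫ y, K t x y * f y‖₊ : ℝ≥0∞) ^ (2:ℝ)) ^ (1 / (2:ℝ))
        ≤ (∫⁻ x, (ENNReal.ofReal C₀) ^ (2:ℝ) *
            (ENNReal.ofReal (phiWeight n σ x t) *
              ∫⁻ y, ENNReal.ofReal (heatKernel n (x - y) (c * t)) *
                (ENNReal.ofReal (phiWeight n σ y t) * ENNReal.ofReal (g y))) ^ (2:ℝ))
            ^ (1 / (2:ℝ)) := by
          apply ENNReal.rpow_le_rpow _ (by norm_num)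
          apply lintegral_mono_ae
          filter_upwards [hpt] with x hx
          calc (‖∫ y, K t x y * f y‖₊ : ℝ≥0∞) ^ (2:ℝ)
              ≤ (ENNReal.ofReal C₀ * (ENNReal.ofReal (phiWeight n σ x t) *
                  ∫⁻ y, ENNReal.ofReal (heatKernel n (x - y) (c * t)) *
                    (ENNReal.ofReal (phiWeight n σ y t) * ENNReal.ofReal (g y)))) ^ (2:ℝ) :=
                ENNReal.rpow_le_rpow hx htwo
            _ = _ := ENNReal.mul_rpow_of_nonneg _ _ htwo
      _ ≤ ((ENNReal.ofReal C₀) ^ (2:ℝ) * (ENNReal.ofReal A ^ (2:ℝ) *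
            ∫⁻ y, ENNReal.ofReal (g y) ^ (2:ℝ))) ^ (1 / (2:ℝ)) := by
          apply ENNReal.rpow_le_rpow _ (by norm_num)
          rw [lintegral_const_mul' _ _
            (ENNReal.rpow_ne_top_of_nonneg htwo ENNReal.ofReal_ne_top)]
          exact mul_le_mul_right (hA t ht (fun y => ENNReal.ofReal (g y)) hFm) _
      _ = ENNReal.ofReal (C₀ * A) *
            (∫⁻ y, (‖f y‖₊ : ℝ≥0∞) ^ (2:ℝ)) ^ (1 / (2:ℝ)) := by
          rw [hf2, ENNReal.mul_rpow_of_nonneg _ _ (by norm_num),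
            ENNReal.mul_rpow_of_nonneg _ _ (by norm_num), ← ENNReal.rpow_mul,
            ← ENNReal.rpow_mul, ← mul_assoc]
          norm_num
          rw [← ENNReal.ofReal_mul hC₀.le]
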